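/- arXiv:2102.08741 — 3 statements merged into one kernel-verified Lean document; each statement's English description precedes it below -/
import Mathlib

section
/- In the field ℚ_p of p-adic numbers with p an odd prime, every nonzero element is a sum of at most 4 squares; in fact every element is a sum of at most 3 squares. -/
open Polynomial

lemma my_toZMod_eq_zero_iff {p : ℕ} [Fact p.Prime] (x : ℤ_[p]) :
    PadicInt.toZMod x = 0 ↔ ‖x‖ < 1 := by
  rw [← RingHom.mem_ker, PadicInt.ker_toZMod, IsLocalRing.mem_maximalIdeal,
    mem_nonunits_iff, PadicInt.not_isUnit_iff]

lemma my_exists_sq_eq {p : ℕ} [Fact p.Prime] (hp : p ≠ 2) (c : ℤ_[p])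
    (t : ZMod p) (ht : t ≠ 0) (hc : PadicInt.toZMod c = t ^ 2) :
    ∃ x : ℤ_[p], x ^ 2 = c := by
  set a : ℤ_[p] := (t.val : ℤ_[p]) with ha
  have hta : PadicInt.toZMod a = t := by
    rw [ha, map_natCast, ZMod.natCast_val, ZMod.cast_id]
  have hna : ‖a‖ = 1 := by
    rcases lt_or_eq_of_le (PadicInt.norm_le_one a) with h | h
    · exact absurd ((my_toZMod_eq_zero_iff a).2 h ▸ hta.symm) (by simpa [hta] using ht)
    · exact h
  have h2 : ‖(2 : ℤ_[p])‖ = 1 := by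
    rcases lt_or_eq_of_le (PadicInt.norm_le_one (2 : ℤ_[p])) with h | h
    · exfalso
      have h2i : (((2:ℤ) : ℤ_[p])) = (2:ℤ_[p]) := by norm_cast
      have h2' : (p : ℤ) ∣ 2 :=
        (PadicInt.norm_int_lt_one_iff_dvd (p := p) 2).1 (by rw [h2i]; exact h)
      have hple : p ≤ 2 := Int.le_of_dvd (by norm_num) h2' |>.trans_eq rfl |> (by exact_mod_cast ·)
      have := (Fact.out : p.Prime).two_le
      interval_cases p
      · exact hp rfl
    · exact h
  obtain ⟨z, hz, -, -, -⟩ := hensels_lemma (p := p) (F := X ^ 2 - C c) (a := a) (by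
    have hderiv : (X ^ 2 - C c : ℤ_[p][X]).derivative = Polynomial.C 2 * X := by
      simp [derivative_X_pow]
      rw [← C_1, ← C_add]; norm_num
    have heval : ((X ^ 2 - C c : ℤ_[p][X]).eval a) = a ^ 2 - c := by simp
    have hlt : ‖a ^ 2 - c‖ < 1 := by
      rw [← my_toZMod_eq_zero_iff]
      simp [hta, hc]
    simp only [coe_aeval_eq_eval]
    rw [heval, hderiv]
    simp [hna, h2, hlt])
  refine ⟨z, ?_⟩
  simpa [sub_eq_zero] using hz

lemma my_unit_sq_add_sq {p : ℕ} [Fact p.Prime] (hp : p ≠ 2) (u : ℤ_[p]) (hu : ‖u‖ = 1) :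
    ∃ x y : ℤ_[p], u = x ^ 2 + y ^ 2 := by
  obtain ⟨a, b, hab⟩ := ZMod.sq_add_sq p (PadicInt.toZMod u)
  have hu0 : PadicInt.toZMod u ≠ 0 := by
    rw [Ne, my_toZMod_eq_zero_iff, hu]; simp
  have hab' : a ≠ 0 ∨ b ≠ 0 := by
    by_contra h
    push_neg at h
    exact hu0 (by simp [← hab, h.1, h.2])
  rcases hab' with ha | hb
  · obtain ⟨x, hx⟩ := my_exists_sq_eq hp (u - (b.val : ℤ_[p]) ^ 2) a ha (by
      simp [map_sub, map_pow, map_natCast, ZMod.natCast_val, ZMod.cast_id, ← hab])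
    exact ⟨x, (b.val : ℤ_[p]), by rw [hx]; ring⟩
  · obtain ⟨x, hx⟩ := my_exists_sq_eq hp (u - (a.val : ℤ_[p]) ^ 2) b hb (by
      simp [map_sub, map_pow, map_natCast, ZMod.natCast_val, ZMod.cast_id, ← hab])
    exact ⟨(a.val : ℤ_[p]), x, by rw [hx]; ring⟩

theorem padic_sum_three_squares (p : ℕ) [Fact p.Prime] (hp : p ≠ 2) :
    ∀ a : ℚ_[p], ∃ x y z : ℚ_[p], a = x ^ 2 + y ^ 2 + z ^ 2 := by
  intro a
  have hp1 : (1 : ℝ) < p := by exact_mod_cast (Fact.out : p.Prime).one_lt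
  obtain ⟨n, hn⟩ := pow_unbounded_of_one_lt ‖a‖ hp1
  set z : ℚ_[p] := (p : ℚ_[p]) ^ (-(n : ℤ)) with hzdef
  have hz2 : ‖z ^ 2‖ = (p : ℝ) ^ (2 * (n : ℤ)) := by
    rw [hzdef, ← zpow_natCast ((p : ℚ_[p]) ^ (-(n : ℤ))), ← zpow_mul,
      Padic.norm_p_zpow]
    congr 1
    push_cast
    ring
  have hlt : ‖a‖ < ‖z ^ 2‖ := by
    rw [hz2]
    calc ‖a‖ < (p : ℝ) ^ n := hn
    _ ≤ (p : ℝ) ^ (2 * n) := by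
        apply pow_le_pow_right₀ (le_of_lt hp1) (by omega)
    _ = (p : ℝ) ^ (2 * (n : ℤ)) := by rw [← zpow_natCast]; norm_cast
  have hz0 : z ≠ 0 := by
    rw [hzdef]
    exact zpow_ne_zero _ (Nat.cast_ne_zero.mpr (Fact.out : p.Prime).ne_zero)
  have hsub : ‖a - z ^ 2‖ = ‖z ^ 2‖ := by
    rw [sub_eq_add_neg, Padic.add_eq_max_of_ne (by rw [norm_neg]; exact ne_of_lt hlt),
      norm_neg, max_eq_right (le_of_lt hlt)]
  have hb : ‖(a - z ^ 2) / z ^ 2‖ = 1 := by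
    rw [norm_div, hsub, div_self]
    rw [hz2]; positivity
  set B : ℤ_[p] := ⟨(a - z ^ 2) / z ^ 2, le_of_eq hb⟩ with hB
  have hBn : ‖B‖ = 1 := hb
  obtain ⟨x, y, hxy⟩ := my_unit_sq_add_sq hp B hBn
  refine ⟨z, z * (x : ℚ_[p]), z * (y : ℚ_[p]), ?_⟩
  have hcoe : (a - z ^ 2) / z ^ 2 = (x : ℚ_[p]) ^ 2 + (y : ℚ_[p]) ^ 2 := by
    have := congrArg (PadicInt.Coe.ringHom (p := p)) hxy
    rw [map_add, map_pow, map_pow] at this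
    exact this
  have hz2' : z ^ 2 ≠ 0 := pow_ne_zero _ hz0
  field_simp at hcoe
  rw [eq_comm] at hcoe ⊢
  linear_combination hcoe
end

section
/- The Pythagoras number of ℚ is 4: every rational number that is a sum of squares is a sum of 4 squares, and there exists a rational number (e.g. 7) that is a sum of squares but not a sum of 3 squares. -/
lemma zmod8_key : ∀ m x y z : ZMod 8, 7*m^2 = x^2+y^2+z^2 → m = 0 ∨ m = 2 ∨ m = 4 ∨ m = 6 := by decide
lemma zmod4_key : ∀ x y z : ZMod 4, x^2+y^2+z^2 = 0 → (x = 0 ∨ x = 2) := by decide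

lemma even_of_zmod8 (n : ℕ)
    (h : (n : ZMod 8) = 0 ∨ (n : ZMod 8) = 2 ∨ (n : ZMod 8) = 4 ∨ (n : ZMod 8) = 6) : 2 ∣ n := by
  rw [← ZMod.natCast_eq_zero_iff]
  have e : (n : ZMod 2) = ZMod.castHom (by norm_num : (2:ℕ) ∣ 8) (ZMod 2) (n : ZMod 8) := by
    simp [map_natCast]
  rw [e]
  rcases h with h | h | h | h <;> rw [h] <;> decide

lemma int_even_of_zmod4 (a : ℤ) (h : (a : ZMod 4) = 0 ∨ (a : ZMod 4) = 2) : (2:ℤ) ∣ a := by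
  have : ((2:ℕ):ℤ) ∣ a := by
    rw [← ZMod.intCast_zmod_eq_zero_iff_dvd]
    have e : (a : ZMod 2) = ZMod.castHom (by norm_num : (2:ℕ) ∣ 4) (ZMod 2) (a : ZMod 4) := by
      simp [map_intCast]
    rw [e]
    rcases h with h | h <;> rw [h] <;> decide
  exact_mod_cast this

lemma no_seven_three_sq : ∀ n : ℕ, ∀ a b c : ℤ, 7 * (n:ℤ)^2 = a^2+b^2+c^2 → n = 0 := by
  intro n
  induction n using Nat.strong_induction_on with
  | _ n ih =>
    intro a b c h
    have h8 : 7 * ((n : ZMod 8))^2 = (a : ZMod 8)^2 + (b : ZMod 8)^2 + (c : ZMod 8)^2 := by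
      have := congrArg (fun z : ℤ => (z : ZMod 8)) h
      push_cast at this
      exact this
    obtain ⟨k, hk⟩ := even_of_zmod8 n (zmod8_key _ _ _ _ h8)
    rcases Nat.eq_zero_or_pos k with hk0 | hkpos
    · omega
    have hklt : k < n := by omega
    subst hk
    have h' : a^2+b^2+c^2 = 4*(7*(k:ℤ)^2) := by push_cast at h; linarith
    have h4 : (a : ZMod 4)^2 + (b : ZMod 4)^2 + (c : ZMod 4)^2 = 0 := by
      have := congrArg (fun z : ℤ => (z : ZMod 4)) h'
      push_cast at this
      rw [this, show ((4:ZMod 4)) = 0 by decide, zero_mul]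
    have hb4 : (b : ZMod 4)^2 + (a : ZMod 4)^2 + (c : ZMod 4)^2 = 0 := by rw [← h4]; ring
    have hc4 : (c : ZMod 4)^2 + (a : ZMod 4)^2 + (b : ZMod 4)^2 = 0 := by rw [← h4]; ring
    obtain ⟨a', ha⟩ := int_even_of_zmod4 a (zmod4_key _ _ _ h4)
    obtain ⟨b', hb⟩ := int_even_of_zmod4 b (zmod4_key _ _ _ hb4)
    obtain ⟨c', hc⟩ := int_even_of_zmod4 c (zmod4_key _ _ _ hc4)
    have hnew : 7 * (k:ℤ)^2 = a'^2 + b'^2 + c'^2 := by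
      have h4ne : (4:ℤ) ≠ 0 := by norm_num
      apply mul_left_cancel₀ h4ne
      subst ha hb hc
      linarith [h']
    exact absurd (ih k hklt a' b' c' hnew) (by omega)

theorem pythagoras_number_rat_eq_four :
    (∀ a : ℚ, (∃ n, ∃ x : Fin n → ℚ, a = ∑ i, x i ^ 2) →
        ∃ x : Fin 4 → ℚ, a = ∑ i, x i ^ 2) ∧
      (∃ n, ∃ x : Fin n → ℚ, (7 : ℚ) = ∑ i, x i ^ 2) ∧
      ¬ ∃ x : Fin 3 → ℚ, (7 : ℚ) = ∑ i, x i ^ 2 := by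
  refine ⟨?_, ⟨4, ![2,1,1,1], by norm_num [Fin.sum_univ_four, Matrix.cons_val_two, Matrix.cons_val_three,
    Matrix.tail_cons, Matrix.head_cons]⟩, ?_⟩
  · rintro a ⟨n, x, hx⟩
    have ha : 0 ≤ a := hx ▸ Finset.sum_nonneg fun i _ => sq_nonneg _
    have hnum : 0 ≤ a.num := Rat.num_nonneg.2 ha
    obtain ⟨p, q, r, s, hpqrs⟩ := Nat.sum_four_squares (a.num * a.den).toNat
    refine ⟨![p / a.den, q / a.den, r / a.den, s / a.den], ?_⟩
    have hden : (a.den : ℚ) ≠ 0 := by exact_mod_cast a.den_ne_zero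
    have hN : ((p:ℚ)^2 + q^2 + r^2 + s^2) = (a.num : ℚ) * a.den := by
      have h1 : (((p^2+q^2+r^2+s^2 : ℕ)) : ℚ) = (((a.num * a.den).toNat : ℕ) : ℚ) := by
        rw [hpqrs]
      have h2 : (((a.num * (a.den:ℤ)).toNat : ℕ) : ℚ) = (a.num : ℚ) * a.den := by
        rw [← Int.cast_natCast, Int.toNat_of_nonneg (by positivity)]
        push_cast; ring
      push_cast at h1
      rw [h1, h2]
    have hnum' : a * (a.den : ℚ) = (a.num : ℚ) :=
      (eq_div_iff hden).mp (Rat.num_div_den a).symm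
    rw [Fin.sum_univ_four]
    simp only [Matrix.cons_val_zero, Matrix.cons_val_one, Matrix.head_cons,
      Matrix.cons_val_two, Matrix.cons_val_three, Matrix.tail_cons]
    rw [div_pow, div_pow, div_pow, div_pow, ← add_div, ← add_div,
      ← add_div, hN, eq_div_iff (by positivity)]
    rw [← hnum']
    ring
  · rintro ⟨x, hx⟩
    rw [Fin.sum_univ_three] at hx
    set d0 := (x 0).den; set d1 := (x 1).den; set d2 := (x 2).den
    have hd0 : ((d0:ℕ) : ℚ) ≠ 0 := by exact_mod_cast (x 0).den_ne_zero
    have hd1 : ((d1:ℕ) : ℚ) ≠ 0 := by exact_mod_cast (x 1).den_ne_zero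
    have hd2 : ((d2:ℕ) : ℚ) ≠ 0 := by exact_mod_cast (x 2).den_ne_zero
    have h0 : ((x 0).num : ℚ) = x 0 * d0 :=
      ((eq_div_iff hd0).mp (Rat.num_div_den (x 0)).symm).symm
    have h1 : ((x 1).num : ℚ) = x 1 * d1 :=
      ((eq_div_iff hd1).mp (Rat.num_div_den (x 1)).symm).symm
    have h2 : ((x 2).num : ℚ) = x 2 * d2 :=
      ((eq_div_iff hd2).mp (Rat.num_div_den (x 2)).symm).symm
    have key : (7:ℚ) * ((d0 * d1 * d2 : ℕ) : ℚ)^2 =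
        (((x 0).num * d1 * d2 : ℤ) : ℚ)^2 + (((x 1).num * d0 * d2 : ℤ) : ℚ)^2 +
        (((x 2).num * d0 * d1 : ℤ) : ℚ)^2 := by
      push_cast
      rw [h0, h1, h2]
      linear_combination ((d0:ℚ) * d1 * d2)^2 * hx
    have keyZ : 7 * ((d0 * d1 * d2 : ℕ) : ℤ)^2 =
        ((x 0).num * d1 * d2)^2 + ((x 1).num * d0 * d2)^2 + ((x 2).num * d0 * d1)^2 := by
      exact_mod_cast key
    have hz := no_seven_three_sq (d0 * d1 * d2) _ _ _ keyZ
    have e0 : d0 ≠ 0 := (x 0).den_ne_zero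
    have e1 : d1 ≠ 0 := (x 1).den_ne_zero
    have e2 : d2 ≠ 0 := (x 2).den_ne_zero
    exact e0 (by simpa [Nat.mul_eq_zero, e1, e2] using hz)
end

section
/- If a is a positive rational number and a is a sum of two squares in ℚ_p for every prime p (including p = 2), then a is a sum of two squares in ℚ. -/
open Padic

/-- If `p % 4 = 3` and a nonzero `c : ℚ_[p]` is a sum of two squares, its valuation is even. -/
lemma even_valuation_of_sq_add_sq (p : ℕ) [Fact p.Prime] (hp3 : p % 4 = 3)
    {c x y : ℚ_[p]} (hc : c ≠ 0) (h : c = x ^ 2 + y ^ 2) : Even c.valuation := by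
  -- WLOG ‖y‖ ≤ ‖x‖
  wlog hxy : ‖y‖ ≤ ‖x‖ generalizing x y
  · exact this (x := y) (y := x) (by rw [h]; ring) (le_of_not_ge hxy)
  have hx : x ≠ 0 := by
    rintro rfl
    rcases eq_or_ne y 0 with rfl | hy
    · simp at h; exact hc h
    · exact hy (norm_eq_zero.mp (le_antisymm (by simpa using hxy) (norm_nonneg y)))
  set t : ℚ_[p] := y / x with ht
  have htle : ‖t‖ ≤ 1 := by
    rw [ht, norm_div]
    exact div_le_one_of_le₀ hxy (norm_nonneg x)
  have hfac : c = x ^ 2 * (1 + t ^ 2) := by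
    have : x ^ 2 * (1 + t ^ 2) = x ^ 2 + y ^ 2 := by
      rw [ht, div_pow, mul_add, mul_one, mul_div_cancel₀ _ (pow_ne_zero 2 hx)]
    rw [h, this]
  -- `1 + t ^ 2` has norm 1
  have hnorm1 : ‖1 + t ^ 2‖ = 1 := by
    rcases lt_or_ge ‖1 + t ^ 2‖ 1 with hlt | hge
    · -- then -1 is a square mod p, contradiction
      exfalso
      set t' : ℤ_[p] := ⟨t, htle⟩ with ht'
      have hmem : ‖(1 + t' ^ 2 : ℤ_[p])‖ < 1 := by
        rw [PadicInt.norm_def, PadicInt.coe_add, PadicInt.coe_one, PadicInt.coe_pow]; exact hlt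
      have hdvd : (p : ℤ_[p]) ∣ (1 + t' ^ 2) := (PadicInt.norm_lt_one_iff_dvd _).mp hmem
      have hker : (1 + t' ^ 2) ∈ RingHom.ker (PadicInt.toZMod (p := p)) := by
        rw [PadicInt.ker_toZMod, PadicInt.maximalIdeal_eq_span_p, Ideal.mem_span_singleton]
        exact hdvd
      have h0 : (PadicInt.toZMod (1 + t' ^ 2) : ZMod p) = 0 := hker
      have hsq : IsSquare (-1 : ZMod p) := by
        refine ⟨PadicInt.toZMod t', ?_⟩
        have : (1 : ZMod p) + (PadicInt.toZMod t') ^ 2 = 0 := by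
          simpa [map_add, map_pow, map_one] using h0
        have := eq_neg_of_add_eq_zero_right this
        rw [← this]; ring
      rw [ZMod.exists_sq_eq_neg_one_iff] at hsq
      exact hsq hp3
    · have hub : ‖1 + t ^ 2‖ ≤ 1 := by
        calc ‖1 + t ^ 2‖ ≤ max ‖(1 : ℚ_[p])‖ ‖t ^ 2‖ := Padic.nonarchimedean _ _
        _ ≤ 1 := by
          apply max_le (by simp)
          rw [norm_pow]
          exact pow_le_one₀ (norm_nonneg t) htle
      exact le_antisymm hub hge
  have hu : (1 + t ^ 2) ≠ 0 := by
    intro h0; rw [h0] at hnorm1; simp at hnorm1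
  have hval0 : (1 + t ^ 2 : ℚ_[p]).valuation = 0 := by
    have := Padic.norm_eq_zpow_neg_valuation hu
    rw [hnorm1] at this
    have hp0 : (0 : ℝ) < (p : ℝ) := by exact_mod_cast (Fact.out : p.Prime).pos
    have hp1 : (p : ℝ) ≠ 1 := by exact_mod_cast (Fact.out : p.Prime).ne_one
    have h00 : (p : ℝ) ^ (-(1 + t ^ 2 : ℚ_[p]).valuation) = (p : ℝ) ^ (0 : ℤ) := by
      simpa using this.symm
    rw [zpow_right_inj₀ hp0 hp1] at h00
    linarith
  have hx2 : x ^ 2 ≠ 0 := pow_ne_zero 2 hx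
  have : c.valuation = (x ^ 2 : ℚ_[p]).valuation + (1 + t ^ 2 : ℚ_[p]).valuation := by
    rw [hfac]; exact Padic.valuation_mul hx2 hu
  rw [this, hval0, add_zero, sq, Padic.valuation_mul hx hx]
  exact Even.add_self _

theorem hasse_minkowski_two_squares (a : ℚ) (ha : 0 < a)
    (h : ∀ (p : ℕ) [Fact p.Prime], ∃ x y : ℚ_[p], (a : ℚ_[p]) = x ^ 2 + y ^ 2) :
    ∃ x y : ℚ, a = x ^ 2 + y ^ 2 := by
  have hnum : 0 < a.num := Rat.num_pos.mpr ha
  have hden : (0 : ℕ) < a.den := a.pos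
  -- the natural number `a.num.natAbs * a.den` is a sum of two squares
  have key : ∃ x y : ℕ, a.num.natAbs * a.den = x ^ 2 + y ^ 2 := by
    rw [Nat.eq_sq_add_sq_iff]
    intro q hq hq3
    haveI : Fact q.Prime := ⟨Nat.prime_of_mem_primeFactors hq⟩
    obtain ⟨x, y, hxy⟩ := h q
    have ha0 : (a : ℚ_[q]) ≠ 0 := by
      exact_mod_cast (Rat.cast_ne_zero (α := ℚ_[q])).mpr ha.ne'
    have hev : Even ((a : ℚ_[q]).valuation) := even_valuation_of_sq_add_sq q hq3 ha0 hxy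
    rw [Padic.valuation_ratCast, padicValRat] at hev
    have hmul : padicValNat q (a.num.natAbs * a.den)
        = padicValNat q a.num.natAbs + padicValNat q a.den := by
      exact padicValNat.mul (by simpa using hnum.ne') hden.ne'
    rw [hmul]
    have : Even ((padicValInt q a.num : ℤ) - (padicValNat q a.den : ℤ)) := hev
    rw [Int.even_sub] at this
    have : Even ((padicValInt q a.num : ℤ) + (padicValNat q a.den : ℤ)) := by
      rw [Int.even_add]; exact this
    unfold padicValInt at this
    exact_mod_cast this
  obtain ⟨x, y, hxy⟩ := key
  refine ⟨(x : ℚ) / a.den, (y : ℚ) / a.den, ?_⟩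
  have hd : ((a.den : ℚ)) ≠ 0 := by exact_mod_cast hden.ne'
  have hnum' : ((a.num.natAbs : ℚ)) = (a.num : ℚ) := by
    rw [Nat.cast_natAbs]
    exact_mod_cast abs_of_nonneg hnum.le
  have h1 : (a.num : ℚ) * a.den = (x : ℚ) ^ 2 + (y : ℚ) ^ 2 := by
    rw [← hnum']
    exact_mod_cast congrArg (Nat.cast (R := ℚ)) hxy
  have h2 : a * (a.den : ℚ) ^ 2 = (a.num : ℚ) * a.den := by
    rw [sq, ← mul_assoc]
    congr 1
    exact_mod_cast Rat.mul_den_eq_num a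
  have key2 : a * (a.den : ℚ) ^ 2 = (x : ℚ) ^ 2 + (y : ℚ) ^ 2 := h2.trans h1
  field_simp
  linear_combination key2
end
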